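/- For each i ∈ [t], the only trading cycle in Q_{2i} with respect to p is (a_1,b_1,...,a_n,b_n, c^i_1,d^i_1,...,c^i_{⌊log t⌋+1}, d^i_{⌊log t⌋+1}) (up to cyclic shift). -/

import Mathlib

variable {A : Type*} {I : Type*}

/-- A strict preference profile: `acc a b` means item `b` is acceptable to agent `a`;
`pref a b b'` means agent `a` strictly prefers item `b'` over item `b`.
Preferences form a strict linear order on the acceptable items of each agent. -/
structure Profile (A : Type*) (I : Type*) where
  acc : A → I → Prop
  pref : A → I → I → Prop
  pref_acc : ∀ a b b', pref a b b' → acc a b ∧ acc a b'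
  irrefl : ∀ a b, ¬ pref a b b
  trans : ∀ a b c d, pref a b c → pref a c d → pref a b d
  total : ∀ a b b', acc a b → acc a b' → b ≠ b' → pref a b b' ∨ pref a b' b

/-- `p` is an assignment: each item is allocated to at most one agent
(`none` plays the role of `b∅`). -/
def IsAssignment (p : A → Option I) : Prop :=
  ∀ a a' b, p a = some b → p a' = some b → a = a'

/-- An assignment is legal if every allocated item is acceptable to its owner. -/
def Legal (P : Profile A I) (p : A → Option I) : Prop :=
  ∀ a b, p a = some b → P.acc a b

/-- Strict comparison of `Option I` values from agent `a`'s point of view,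
with `none` (i.e. `b∅`) least preferred. -/
def Profile.better (P : Profile A I) (a : A) (x y : Option I) : Prop :=
  match x, y with
  | none, some b => P.acc a b
  | some b, some b' => P.pref a b b'
  | _, none => False

def Profile.betterEq (P : Profile A I) (a : A) (x y : Option I) : Prop :=
  x = y ∨ P.better a x y

/-- `q` pareto dominates `p`. -/
def Dominates (P : Profile A I) (p q : A → Option I) : Prop :=
  (∀ a, P.betterEq a (p a) (q a)) ∧ ∃ a, P.better a (p a) (q a)

/-- `p` is pareto optimal: no legal assignment pareto dominates it. -/
def ParetoOptimal (P : Profile A I) (p : A → Option I) : Prop :=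
  ¬ ∃ q : A → Option I, IsAssignment q ∧ Legal P q ∧ Dominates P p q

/-- Cyclic successor on `Fin t`. -/
def cycSucc {t : ℕ} (r : Fin t) : Fin t := ⟨((r : ℕ) + 1) % t, Nat.mod_lt _ (by have := r.2; omega)⟩

/-- `σ` lists the agents of a trading cycle with respect to assignment `p`:
the agents are distinct, each is allocated an item, and each agent strictly prefers
the item of the (cyclically) next agent over its own. -/
def IsTradingCycle (pref : A → I → I → Prop) (p : A → Option I) {t : ℕ}
    (σ : Fin t → A) : Prop :=
  Function.Injective σ ∧
    ∀ r : Fin t, ∃ b b', p (σ r) = some b ∧ p (σ (cycSucc r)) = some b' ∧ pref (σ r) b b'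

/-- The assignment admits some trading cycle. -/
def AdmitsCycle (pref : A → I → I → Prop) (p : A → Option I) : Prop :=
  ∃ (t : ℕ) (_ : 0 < t) (σ : Fin t → A), IsTradingCycle pref p σ

/-- Agent `a` admits a self loop: some unallocated item is strictly preferred by `a`
over its own allocation. -/
def AdmitsSelfLoop (P : Profile A I) (p : A → Option I) (a : A) : Prop :=
  ∃ b : I, (∀ a', p a' ≠ some b) ∧ P.better a (p a) (some b)

/-- The set `K` of agents admits a trading cycle (whose agent set is exactly `K`). -/
def SetAdmitsCycle [DecidableEq A] (pref : A → I → I → Prop) (p : A → Option I)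
    (K : Finset A) : Prop :=
  ∃ (t : ℕ) (_ : 0 < t) (σ : Fin t → A),
    IsTradingCycle pref p σ ∧ Finset.image σ Finset.univ = K

/-- `(k,α)`-optimality for a multi-layered instance `P : Fin ℓ → Profile A I`. -/
def KAOptimal [DecidableEq A] {ℓ : ℕ} (P : Fin ℓ → Profile A I) (p : A → Option I)
    (k α : ℕ) : Prop :=
  (2 ≤ k → ∀ K : Finset A, K.card = k →
      ∃ L : Finset (Fin ℓ), L.card = α ∧ ∀ j ∈ L, ¬ SetAdmitsCycle (P j).pref p K) ∧
  (k = 1 → ∀ a : A, ∃ L : Finset (Fin ℓ), L.card = α ∧ ∀ j ∈ L, ¬ AdmitsSelfLoop (P j) p a)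

/-- `(k,α)`-upper-bounded optimality. -/
def UBOptimal [DecidableEq A] {ℓ : ℕ} (P : Fin ℓ → Profile A I) (p : A → Option I)
    (k α : ℕ) : Prop :=
  (∀ K : Finset A, K.card ≤ k →
      ∃ L : Finset (Fin ℓ), L.card = α ∧ ∀ j ∈ L, ¬ SetAdmitsCycle (P j).pref p K) ∧
  (∀ a : A, ∃ L : Finset (Fin ℓ), L.card = α ∧ ∀ j ∈ L, ¬ AdmitsSelfLoop (P j) p a)

/-- `(k,α)`-subset optimality. -/
def SubsetOptimal [DecidableEq A] {ℓ : ℕ} (P : Fin ℓ → Profile A I) (p : A → Option I)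
    (k α : ℕ) : Prop :=
  (∀ K : Finset A, K.card = k →
      ∃ L : Finset (Fin ℓ), L.card = α ∧
        ∀ j ∈ L, ∀ K' : Finset A, K ⊆ K' → ¬ SetAdmitsCycle (P j).pref p K') ∧
  (k = 1 → ∀ a : A, ∃ L : Finset (Fin ℓ), L.card = α ∧ ∀ j ∈ L, ¬ AdmitsSelfLoop (P j) p a)

/-- `(k,α)`-subset* optimality: the subset condition for all nonempty subsets of size
at most `k`, and the self-loop condition for every value of `k`. -/
def SubsetStarOptimal [DecidableEq A] {ℓ : ℕ} (P : Fin ℓ → Profile A I) (p : A → Option I)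
    (k α : ℕ) : Prop :=
  (∀ K : Finset A, K.Nonempty → K.card ≤ k →
      ∃ L : Finset (Fin ℓ), L.card = α ∧
        ∀ j ∈ L, ∀ K' : Finset A, K ⊆ K' → ¬ SetAdmitsCycle (P j).pref p K') ∧
  (∀ a : A, ∃ L : Finset (Fin ℓ), L.card = α ∧ ∀ j ∈ L, ¬ AdmitsSelfLoop (P j) p a)

/-- `ℓ`-global optimality: pareto optimal (no trading cycle, no self loop) in every layer. -/
def GloballyOptimal {ℓ : ℕ} (P : Fin ℓ → Profile A I) (p : A → Option I) : Prop :=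
  ∀ j : Fin ℓ, ¬ AdmitsCycle (P j).pref p ∧ ∀ a : A, ¬ AdmitsSelfLoop (P j) p a

/-- The trading graph of `(A, I, P, p)` on vertex set `A ⊕ I`. -/
def TGraph (P : Profile A I) (p : A → Option I) : (A ⊕ I) → (A ⊕ I) → Prop :=
  fun x y =>
    match x, y with
    | Sum.inr b, Sum.inl a => p a = some b ∨ ((∀ a', p a' ≠ some b) ∧ P.acc a b)
    | Sum.inl a, Sum.inr b => (∃ b₀, p a = some b₀ ∧ P.pref a b₀ b) ∨ (p a = none ∧ P.acc a b)
    | Sum.inl _, Sum.inl _ => False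
    | Sum.inr _, Sum.inr _ => False

/-- The restriction of `p` to the reduced instance (agents allocated an item,
items allocated to some agent). -/
def redAssign (p : A → Option I) (a : {a : A // p a ≠ none}) :
    Option {b : I // ∃ a', p a' = some b} :=
  match h : p a.1 with
  | none => none
  | some b => some ⟨b, a.1, h⟩

/-- The identity assignment `p_n (a_i) = b_i` on `n` agents/items. -/
def pn (n : ℕ) : Fin n → Option (Fin n) := fun i => some i

/-- The profile `P₁(G)`: agent `a_i` prefers exactly the items
`{b_j : (v_i , v_j) ∈ E}` over its own item `b_i`. -/
def P1pref {n : ℕ} (E : Fin n → Fin n → Prop) : Fin n → Fin n → Fin n → Prop :=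
  fun i b b' => b = i ∧ E i b'

/-- The profile `P₂(n)`: agent `a_i` prefers only `b_{i+1}` (cyclically) over `b_i`. -/
def P2pref (n : ℕ) : Fin n → Fin n → Fin n → Prop :=
  fun i b b' => b = i ∧ b' = cycSucc i

/-- `colorEnum u w j` is `s_{j+1}`, the `(j+1)`-st smallest color of `[k̃] \ {u,w}`
(0-indexed `j`). -/
def colorEnum {kt : ℕ} (u w : Fin kt) (j : ℕ) : Fin kt :=
  (((Finset.univ : Finset (Fin kt)) \ {u, w}).sort (· ≤ ·)).getD j u

/-- The layer `P^{MCIS}_{{u,w}}` of the multicolored-independent-set reduction,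
recorded via the comparisons with the agents' own items. -/
def MCISpref {n kt : ℕ} (E : Fin n → Fin n → Prop) (c : Fin n → Fin kt)
    (u w : Fin kt) : Fin n → Fin n → Fin n → Prop :=
  fun r b b' => b = r ∧
    ((∃ j : ℕ, j + 1 < kt - 2 ∧ c r = colorEnum u w j ∧ c b' = colorEnum u w (j + 1)) ∨
      (0 < kt - 2 ∧ c r = colorEnum u w (kt - 3) ∧ c b' = u) ∨
      (c r = u ∧ c b' = w ∧ ¬ E r b') ∨
      (0 < kt - 2 ∧ c r = w ∧ c b' = colorEnum u w 0))

/-- Agents (and, identified with them, items) of the cross-composition for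
`Verify-UOA`: `Sum.inl r` is `a_r`; `Sum.inr (j, true)` is `c_j`; `Sum.inr (j, false)`
is `c̄_j`. Each agent owns "its" item. -/
abbrev AgQ (n s : ℕ) := Fin n ⊕ (Fin s × Bool)

/-- The assignment matching each agent with its own item. -/
def pQ (n s : ℕ) : AgQ n s → Option (AgQ n s) := fun a => some a

/-- The profile `Q_{2i-1}` (extending `P₁(G_i)`), recorded via comparisons
with the agents' own items.  `i.testBit j` is the `j`-th bit of `i`. -/
def Q1pref (n s : ℕ) (E : Fin n → Fin n → Prop) (i : ℕ) :
    AgQ n s → AgQ n s → AgQ n s → Prop :=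
  fun a b b' => b = a ∧
    match a, b' with
    | Sum.inl r, Sum.inl r' => (r : ℕ) + 1 < n ∧ E r r'
    | Sum.inl r, Sum.inr (j, bb) => (r : ℕ) = n - 1 ∧ (j : ℕ) = 0 ∧ bb = i.testBit 0
    | Sum.inr (j, bb), Sum.inr (j', bb') =>
        bb = i.testBit (j : ℕ) ∧ (j' : ℕ) = (j : ℕ) + 1 ∧ bb' = i.testBit (j' : ℕ)
    | Sum.inr (j, bb), Sum.inl r' =>
        bb = i.testBit (j : ℕ) ∧ (j : ℕ) = s - 1 ∧ ∃ rn : Fin n, (rn : ℕ) = n - 1 ∧ E rn r'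

/-- The profile `Q_{2i}` (extending `P₂(n)`), recorded via comparisons
with the agents' own items. -/
def Q2pref (n s : ℕ) (i : ℕ) : AgQ n s → AgQ n s → AgQ n s → Prop :=
  fun a b b' => b = a ∧
    match a, b' with
    | Sum.inl r, Sum.inl r' => (r' : ℕ) = (r : ℕ) + 1
    | Sum.inl r, Sum.inr (j, bb) => (r : ℕ) = n - 1 ∧ (j : ℕ) = 0 ∧ bb = i.testBit 0
    | Sum.inr (j, bb), Sum.inr (j', bb') =>
        bb = i.testBit (j : ℕ) ∧ (j' : ℕ) = (j : ℕ) + 1 ∧ bb' = i.testBit (j' : ℕ)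
    | Sum.inr (j, bb), Sum.inl r' =>
        bb = i.testBit (j : ℕ) ∧ (j : ℕ) = s - 1 ∧ (r' : ℕ) = 0

/-- A list of agents forming a trading cycle with respect to `p`. -/
def IsTCList (pref : A → I → I → Prop) (p : A → Option I) (L : List A) : Prop :=
  L ≠ [] ∧ L.Nodup ∧
    ∀ r : Fin L.length, ∃ b b',
      p (L.get r) = some b ∧ p (L.get (cycSucc r)) = some b' ∧ pref (L.get r) b b'


namespace St18

variable {n s i : ℕ}

def tau (n s i : ℕ) : Fin (n + s) → AgQ n s :=
  fun r =>
    if h : (r : ℕ) < n then Sum.inl (⟨(r : ℕ), h⟩ : Fin n)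
    else Sum.inr (⟨(r : ℕ) - n, by omega⟩, i.testBit ((r : ℕ) - n))

lemma succ_unique {a b1 b2 : AgQ n s} (h1 : Q2pref n s i a a b1)
    (h2 : Q2pref n s i a a b2) : b1 = b2 := by
  obtain ⟨-, h1⟩ := h1
  obtain ⟨-, h2⟩ := h2
  rcases a with r | ⟨j, bb⟩ <;> rcases b1 with r1 | ⟨j1, c1⟩ <;> rcases b2 with r2 | ⟨j2, c2⟩ <;>
      simp only [Q2pref] at h1 h2
  · exact congrArg Sum.inl (Fin.ext (by omega))
  · exfalso; omega
  · exfalso; omega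
  · obtain ⟨-, e1, f1⟩ := h1; obtain ⟨-, e2, f2⟩ := h2
    have : (j1:ℕ) = j2 := by omega
    subst f1; subst f2
    exact congrArg Sum.inr (by rw [Fin.ext this])
  · exact congrArg Sum.inl (Fin.ext (by omega))
  · exfalso; omega
  · exfalso; omega
  · obtain ⟨-, e1, f1⟩ := h1; obtain ⟨-, e2, f2⟩ := h2
    have : (j1:ℕ) = j2 := by omega
    subst f1; subst f2
    exact congrArg Sum.inr (by rw [Fin.ext this])

lemma cyc_val (hn : 0 < n) (hs : 0 < s) (r : Fin (n + s)) :
    ((r : ℕ) + 1 = n + s ∧ (cycSucc r : ℕ) = 0) ∨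
      ((r : ℕ) + 1 < n + s ∧ (cycSucc r : ℕ) = (r : ℕ) + 1) := by
  have hr := r.isLt
  have hc : (cycSucc r : ℕ) = ((r : ℕ) + 1) % (n + s) := rfl
  rcases Nat.lt_or_ge ((r : ℕ) + 1) (n + s) with h | h
  · exact Or.inr ⟨h, by rw [hc, Nat.mod_eq_of_lt h]⟩
  · have he : (r : ℕ) + 1 = n + s := by omega
    exact Or.inl ⟨he, by rw [hc, he, Nat.mod_self]⟩

lemma tau_succ (hn : 0 < n) (hs : 0 < s) (r : Fin (n + s)) :
    Q2pref n s i (tau n s i r) (tau n s i r) (tau n s i (cycSucc r)) := by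
  have hr := r.isLt
  have hc := cyc_val hn hs r
  by_cases h1 : (r : ℕ) < n
  · have e1 : tau n s i r = Sum.inl ⟨(r : ℕ), h1⟩ := dif_pos h1
    by_cases h2 : ((cycSucc r : Fin (n+s)) : ℕ) < n
    · have e2 : tau n s i (cycSucc r) = Sum.inl ⟨((cycSucc r : Fin (n+s)) : ℕ), h2⟩ := dif_pos h2
      rw [e1, e2]
      exact ⟨rfl, show ((cycSucc r : Fin (n+s)) : ℕ) = (r : ℕ) + 1 by omega⟩
    · have e2 : tau n s i (cycSucc r) =
          Sum.inr (⟨((cycSucc r : Fin (n+s)) : ℕ) - n, by omega⟩,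
            i.testBit (((cycSucc r : Fin (n+s)) : ℕ) - n)) := dif_neg h2
      rw [e1, e2]
      exact ⟨rfl, show (r : ℕ) = n - 1 by omega,
        show ((cycSucc r : Fin (n+s)) : ℕ) - n = 0 by omega,
        congrArg i.testBit (show ((cycSucc r : Fin (n+s)) : ℕ) - n = 0 by omega)⟩
  · have e1 : tau n s i r = Sum.inr (⟨(r : ℕ) - n, by omega⟩, i.testBit ((r : ℕ) - n)) :=
      dif_neg h1
    by_cases h2 : ((cycSucc r : Fin (n+s)) : ℕ) < n
    · have e2 : tau n s i (cycSucc r) = Sum.inl ⟨((cycSucc r : Fin (n+s)) : ℕ), h2⟩ := dif_pos h2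
      rw [e1, e2]
      exact ⟨rfl, rfl, show (r : ℕ) - n = s - 1 by omega,
        show ((cycSucc r : Fin (n+s)) : ℕ) = 0 by omega⟩
    · have e2 : tau n s i (cycSucc r) =
          Sum.inr (⟨((cycSucc r : Fin (n+s)) : ℕ) - n, by omega⟩,
            i.testBit (((cycSucc r : Fin (n+s)) : ℕ) - n)) := dif_neg h2
      rw [e1, e2]
      exact ⟨rfl, rfl, show ((cycSucc r : Fin (n+s)) : ℕ) - n = (r : ℕ) - n + 1 by omega, rfl⟩

lemma tau_inj : Function.Injective (tau n s i) := by
  intro x y h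
  unfold tau at h
  by_cases h1 : (x : ℕ) < n <;> by_cases h2 : (y : ℕ) < n
  · rw [dif_pos h1, dif_pos h2] at h
    simp only [Sum.inl.injEq, Fin.mk.injEq] at h
    exact Fin.ext h
  · rw [dif_pos h1, dif_neg h2] at h
    exact absurd h (by simp)
  · rw [dif_neg h1, dif_pos h2] at h
    exact absurd h (by simp)
  · rw [dif_neg h1, dif_neg h2] at h
    simp only [Sum.inr.injEq, Prod.mk.injEq, Fin.mk.injEq] at h
    exact Fin.ext (by omega)

lemma source_mem {a b' : AgQ n s} (h : Q2pref n s i a a b') :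
    ∃ r : Fin (n + s), tau n s i r = a := by
  obtain ⟨-, h⟩ := h
  rcases a with r | ⟨j, bb⟩
  · exact ⟨⟨r, by omega⟩, by unfold tau; rw [dif_pos (by simpa using r.isLt)]⟩
  · have hb : bb = i.testBit (j : ℕ) := by
      rcases b' with r' | ⟨j', bb'⟩ <;> simp only [Q2pref] at h
      exacts [h.1, h.1]
    refine ⟨⟨n + (j : ℕ), by omega⟩, ?_⟩
    unfold tau
    rw [dif_neg (by simp)]
    simp [hb]

open Fin.NatCast in
lemma main (hn : 0 < n) (hs : 0 < s) (m : ℕ) (hm : 0 < m) (σ : Fin m → AgQ n s)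
    (hσ : IsTradingCycle (Q2pref n s i) (pQ n s) σ) :
    ∃ (h : m = n + s) (sh : Fin (n + s)),
      ∀ r : Fin (n + s), σ (Fin.cast h.symm (r + sh)) = tau n s i r := by
  haveI : NeZero (n + s) := ⟨by omega⟩
  haveI : NeZero m := ⟨by omega⟩
  obtain ⟨hinj, hcyc⟩ := hσ
  have step : ∀ r : Fin m, Q2pref n s i (σ r) (σ r) (σ (cycSucc r)) := by
    intro r
    obtain ⟨b, b', hb, hb', hp⟩ := hcyc r
    have e1 : σ r = b := Option.some.inj hb
    have e2 : σ (cycSucc r) = b' := Option.some.inj hb'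
    subst e1; subst e2
    exact hp
  choose f hf using fun r => source_mem (step r)
  have hfs : ∀ r : Fin m, f (cycSucc r) = cycSucc (f r) := by
    intro r
    apply tau_inj
    rw [hf]
    have h1 := step r
    rw [← hf r] at h1
    exact succ_unique h1 (tau_succ hn hs (f r))
  have hcyc1 : ∀ x : Fin (n + s), cycSucc x = x + 1 := by
    intro x
    apply Fin.ext
    show ((x : ℕ) + 1) % (n + s) = _
    rw [Fin.add_def, Fin.val_one']
    rw [Nat.mod_eq_of_lt (show 1 < n + s by omega)]
  have iter : ∀ (k : ℕ) (r : Fin m),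
      f ⟨((r : ℕ) + k) % m, Nat.mod_lt _ hm⟩ = f r + (k : Fin (n + s)) := by
    intro k
    induction k with
    | zero =>
      intro r
      have e : (⟨((r : ℕ) + 0) % m, Nat.mod_lt _ hm⟩ : Fin m) = r :=
        Fin.ext (by simp [Nat.mod_eq_of_lt r.isLt])
      rw [e]
      simp
    | succ k ih =>
      intro r
      have e : (⟨((r : ℕ) + (k + 1)) % m, Nat.mod_lt _ hm⟩ : Fin m) =
          cycSucc ⟨((r : ℕ) + k) % m, Nat.mod_lt _ hm⟩ := by
        apply Fin.ext
        show ((r : ℕ) + (k + 1)) % m = (((r : ℕ) + k) % m + 1) % m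
        rw [Nat.mod_add_mod, Nat.add_assoc]
      rw [e, hfs, ih, hcyc1]
      push_cast
      rw [add_assoc]
  have hfr : ∀ r : Fin m, f r = f 0 + (((r : ℕ) : Fin (n + s))) := by
    intro r
    have h0 := iter (r : ℕ) 0
    have e : (⟨(((0 : Fin m) : ℕ) + (r : ℕ)) % m, Nat.mod_lt _ hm⟩ : Fin m) = r := by
      apply Fin.ext
      simp [Nat.mod_eq_of_lt r.isLt]
    rwa [e] at h0
  have hfinj : Function.Injective f := fun a b hab => hinj (by rw [← hf, ← hf, hab])
  have hle : m ≤ n + s := by simpa using Fintype.card_le_of_injective f hfinj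
  have hdvd : (n + s) ∣ m := by
    have h0 := iter m 0
    have e : (⟨(((0 : Fin m) : ℕ) + m) % m, Nat.mod_lt _ hm⟩ : Fin m) = 0 := by
      apply Fin.ext
      simp
    rw [e] at h0
    exact Fin.natCast_eq_zero.mp (left_eq_add.mp h0)
  have hms : m = n + s := by
    have := Nat.le_of_dvd hm hdvd
    omega
  refine ⟨hms, -(f 0), fun r => ?_⟩
  rw [← hf]
  have hx : f (Fin.cast hms.symm (r + -f 0)) = r := by
    rw [hfr]
    rw [show (((Fin.cast hms.symm (r + -f 0)) : ℕ) : Fin (n + s)) = r + -f 0 by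
      rw [Fin.coe_cast]; exact Fin.cast_val_eq_self _]
    rw [add_comm r, ← add_assoc, add_neg_cancel, zero_add]
  rw [hx]

end St18

/-- the only trading cycle in `Q_{2i}` with respect to `p` is
`(a_1,b_1,…,a_n,b_n,c^i_1,d^i_1,…,c^i_{⌊log t⌋+1},d^i_{⌊log t⌋+1})`, up to cyclic shift. -/
theorem statement18 (n t i : ℕ) (hn : 0 < n) (hi1 : 1 ≤ i) (hi2 : i ≤ t) :
    IsTradingCycle (Q2pref n (Nat.log 2 t + 1) i) (pQ n (Nat.log 2 t + 1))
      (fun r : Fin (n + (Nat.log 2 t + 1)) =>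
        if h : (r : ℕ) < n then Sum.inl (⟨(r : ℕ), h⟩ : Fin n)
        else Sum.inr (⟨(r : ℕ) - n, by omega⟩, i.testBit ((r : ℕ) - n))) ∧
    ∀ (m : ℕ), 0 < m → ∀ σ : Fin m → AgQ n (Nat.log 2 t + 1),
      IsTradingCycle (Q2pref n (Nat.log 2 t + 1) i) (pQ n (Nat.log 2 t + 1)) σ →
        ∃ (h : m = n + (Nat.log 2 t + 1)) (sh : Fin (n + (Nat.log 2 t + 1))),
          ∀ r : Fin (n + (Nat.log 2 t + 1)),
            σ (Fin.cast h.symm (r + sh)) =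
              (if hr : (r : ℕ) < n then Sum.inl (⟨(r : ℕ), hr⟩ : Fin n)
               else Sum.inr (⟨(r : ℕ) - n, by omega⟩, i.testBit ((r : ℕ) - n))) := by
  constructor
  · exact ⟨St18.tau_inj, fun r => ⟨_, _, rfl, rfl, St18.tau_succ hn (Nat.succ_pos _) r⟩⟩
  · intro m hm σ hσ
    exact St18.main hn (Nat.succ_pos _) m hm σ hσ
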